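/- Let a, b, c be nonnegative reals and A ∈ [0, π] be such that cosh a = cosh b · cosh c − sinh b · sinh c · cos A, and assume b ≤ 1/4. Let ā ≥ 0 be defined by ā² = b² + c² − 2 b c cos A. Then ā² ≤ a² ≤ (1 + 2 b²) ā². -/

import Mathlib

open Real Set

private lemma monoIci {x0 : ℝ} {f f' : ℝ → ℝ}
    (hd : ∀ x, HasDerivAt f (f' x) x)
    (h' : ∀ x, x0 < x → 0 ≤ f' x) {t : ℝ} (ht : x0 ≤ t) : f x0 ≤ f t := by
  have H : MonotoneOn f (Set.Ici x0) := by
    refine monotoneOn_of_deriv_nonneg (convex_Ici x0) ?_ ?_ ?_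
    · exact fun x _ => ((hd x).continuousAt).continuousWithinAt
    · intro x _; exact ((hd x).differentiableAt).differentiableWithinAt
    · intro x hx
      rw [interior_Ici] at hx
      rw [(hd x).deriv]
      exact h' x hx
  exact H Set.self_mem_Ici ht ht

private lemma monoIcc {T : ℝ} {f f' : ℝ → ℝ}
    (hd : ∀ x, HasDerivAt f (f' x) x)
    (h' : ∀ x, 0 < x → x < T → 0 ≤ f' x) {t : ℝ} (h0 : 0 ≤ t) (hT : t ≤ T) :
    f 0 ≤ f t := by
  have H : MonotoneOn f (Set.Icc 0 T) := by
    refine monotoneOn_of_deriv_nonneg (convex_Icc 0 T) ?_ ?_ ?_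
    · exact fun x _ => ((hd x).continuousAt).continuousWithinAt
    · intro x _; exact ((hd x).differentiableAt).differentiableWithinAt
    · intro x hx
      rw [interior_Icc] at hx
      rw [(hd x).deriv]
      exact h' x hx.1 hx.2
  exact H ⟨le_refl 0, h0.trans hT⟩ ⟨h0, hT⟩ h0

private lemma antiIcc {T : ℝ} {f f' : ℝ → ℝ}
    (hd : ∀ x, HasDerivAt f (f' x) x)
    (h' : ∀ x, 0 < x → x < T → f' x ≤ 0) {t : ℝ} (h0 : 0 ≤ t) (hT : t ≤ T) :
    f T ≤ f t := by
  have H : AntitoneOn f (Set.Icc 0 T) := by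
    refine antitoneOn_of_deriv_nonpos (convex_Icc 0 T) ?_ ?_ ?_
    · exact fun x _ => ((hd x).continuousAt).continuousWithinAt
    · intro x _; exact ((hd x).differentiableAt).differentiableWithinAt
    · intro x hx
      rw [interior_Icc] at hx
      rw [(hd x).deriv]
      exact h' x hx.1 hx.2
  exact H ⟨h0, hT⟩ ⟨h0.trans hT, le_refl T⟩ hT

-- sinh t ≤ t cosh t  for t ≥ 0
private lemma sinh_le_mul_cosh {t : ℝ} (ht : 0 ≤ t) : Real.sinh t ≤ t * Real.cosh t := by
  have h := monoIci (f := fun s => s * Real.cosh s - Real.sinh s)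
      (f' := fun s => (1 * Real.cosh s + s * Real.sinh s) - Real.cosh s)
      (fun x => ((hasDerivAt_id x).mul (Real.hasDerivAt_cosh x)).sub (Real.hasDerivAt_sinh x))
      (fun x hx => by show (0:ℝ) ≤ 1 * Real.cosh x + x * Real.sinh x - Real.cosh x; nlinarith [Real.sinh_pos_iff.2 hx]) (x0 := 0) ht
  simp at h
  linarith

-- cosh t ≤ 1 + t sinh t  for t ≥ 0
private lemma cosh_le_one_add {t : ℝ} (ht : 0 ≤ t) : Real.cosh t ≤ 1 + t * Real.sinh t := by
  have h := monoIci (f := fun s => 1 + s * Real.sinh s - Real.cosh s)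
      (f' := fun s => (0 + (1 * Real.sinh s + s * Real.cosh s)) - Real.sinh s)
      (fun x => (((hasDerivAt_const x (1:ℝ)).add ((hasDerivAt_id x).mul (Real.hasDerivAt_sinh x))).sub (Real.hasDerivAt_cosh x)))
      (fun x hx => by show (0:ℝ) ≤ 0 + (1 * Real.sinh x + x * Real.cosh x) - Real.sinh x; nlinarith [Real.cosh_pos x]) (x0 := 0) ht
  simp at h
  linarith

-- sinh x / x monotone:  0 < x ≤ y → y sinh x ≤ x sinh y
private lemma phi_mono {x y : ℝ} (hx : 0 < x) (hxy : x ≤ y) :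
    y * Real.sinh x ≤ x * Real.sinh y := by
  have h := monoIci (x0 := x) (f := fun t => x * Real.sinh t - t * Real.sinh x)
      (f' := fun t => x * Real.cosh t - (1 * Real.sinh x + t * 0))
      (fun t => ((Real.hasDerivAt_sinh t).const_mul x).sub
        ((hasDerivAt_id t).mul (hasDerivAt_const t (Real.sinh x))))
      (fun t htx => by
        show (0:ℝ) ≤ x * Real.cosh t - (1 * Real.sinh x + t * 0)
        have h1 : Real.sinh x ≤ x * Real.cosh x := sinh_le_mul_cosh hx.le
        have h2 : Real.cosh x ≤ Real.cosh t := by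
          rw [Real.cosh_le_cosh, abs_of_pos hx, abs_of_pos (hx.trans htx)]
          exact htx.le
        nlinarith) hxy
  nlinarith [h]

-- y cosh y ≤ (1 + y²/3) sinh y  for y ≥ 0
private lemma L3 {y : ℝ} (hy : 0 ≤ y) :
    y * Real.cosh y ≤ (1 + y ^ 2 / 3) * Real.sinh y := by
  have h := monoIci (x0 := 0) (f := fun t => (1 + t ^ 2 / 3) * Real.sinh t - t * Real.cosh t)
      (f' := fun t => ((0 + 2 * t ^ 1 / 3) * Real.sinh t + (1 + t ^ 2 / 3) * Real.cosh t)
        - (1 * Real.cosh t + t * Real.sinh t))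
      (fun t => ((((hasDerivAt_const t (1:ℝ)).add ((hasDerivAt_pow 2 t).div_const 3)).mul
          (Real.hasDerivAt_sinh t)).sub ((hasDerivAt_id t).mul (Real.hasDerivAt_cosh t))))
      (fun t ht0 => by
        show (0:ℝ) ≤ ((0 + 2 * t ^ 1 / 3) * Real.sinh t + (1 + t ^ 2 / 3) * Real.cosh t)
          - (1 * Real.cosh t + t * Real.sinh t)
        have h1 : Real.sinh t ≤ t * Real.cosh t := sinh_le_mul_cosh ht0.le
        nlinarith [Real.cosh_pos t]) hy
  norm_num [Real.sinh_zero, Real.cosh_zero] at h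
  nlinarith [h]

-- cosh t (1 - t²) ≤ 1 for t ≥ 0
private lemma cosh_one_sub_sq {t : ℝ} (ht : 0 ≤ t) : Real.cosh t * (1 - t ^ 2) ≤ 1 := by
  have h1 := cosh_le_one_add ht
  have h2 := sinh_le_mul_cosh ht
  nlinarith [Real.cosh_pos t]

-- sinh t ≤ t + (4/9)t³ on [0,1/2]
private lemma sinh_taylor0 {t : ℝ} (h0 : 0 ≤ t) (h2 : t ≤ 1/2) :
    Real.sinh t ≤ t + (4/9) * t ^ 3 := by
  have h := monoIcc (T := (1:ℝ)/2) (f := fun s => s + (4/9) * s ^ 3 - Real.sinh s)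
      (f' := fun s => (1 + (4/9) * (3 * s ^ 2)) - Real.cosh s)
      (fun s => (((hasDerivAt_id s).add (((hasDerivAt_pow 3 s)).const_mul (4/9))).sub
          (Real.hasDerivAt_sinh s)).congr_deriv (by ring))
      (fun s hs0 hsT => by
        show (0:ℝ) ≤ (1 + (4/9) * (3 * s ^ 2)) - Real.cosh s
        have h3 : (0:ℝ) < 1 - s ^ 2 := by nlinarith
        have h4 : Real.cosh s * (1 - s^2) ≤ (1 + 4/3*s^2) * (1-s^2) := by
          nlinarith [cosh_one_sub_sq hs0.le,
            mul_nonneg (mul_nonneg hs0.le hs0.le) (by nlinarith : (0:ℝ) ≤ 1 - 4*s^2)]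
        have h5 := le_of_mul_le_mul_right h4 h3
        nlinarith) h0 h2
  norm_num [Real.sinh_zero] at h
  nlinarith [h]

-- cosh t ≤ 1 + t²/2 + t⁴/9 on [0,1/2]
private lemma cosh_taylor0 {t : ℝ} (h0 : 0 ≤ t) (h2 : t ≤ 1/2) :
    Real.cosh t ≤ 1 + t ^ 2 / 2 + t ^ 4 / 9 := by
  have h := monoIcc (T := (1:ℝ)/2)
      (f := fun s => 1 + s ^ 2 / 2 + s ^ 4 / 9 - Real.cosh s)
      (f' := fun s => (0 + 2 * s ^ 1 / 2 + 4 * s ^ 3 / 9) - Real.sinh s)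
      (fun s => ((((hasDerivAt_const s (1:ℝ)).add ((hasDerivAt_pow 2 s).div_const 2)).add
          ((hasDerivAt_pow 4 s).div_const 9)).sub (Real.hasDerivAt_cosh s)).congr_deriv
          (by norm_num))
      (fun s hs0 hsT => by
        show (0:ℝ) ≤ 0 + 2 * s ^ 1 / 2 + 4 * s ^ 3 / 9 - Real.sinh s
        have := sinh_taylor0 hs0.le hsT.le
        nlinarith) h0 h2
  norm_num [Real.cosh_zero] at h
  nlinarith [h]

-- sinh t ≤ t + (19/108) t³ on [0,1/2]
private lemma sinh_taylor {t : ℝ} (h0 : 0 ≤ t) (h2 : t ≤ 1/2) :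
    Real.sinh t ≤ t + (19/108) * t ^ 3 := by
  have h := monoIcc (T := (1:ℝ)/2)
      (f := fun s => s + (19/108) * s ^ 3 - Real.sinh s)
      (f' := fun s => (1 + (19/108) * (3 * s ^ 2)) - Real.cosh s)
      (fun s => (((hasDerivAt_id s).add (((hasDerivAt_pow 3 s)).const_mul (19/108))).sub
          (Real.hasDerivAt_sinh s)).congr_deriv (by ring))
      (fun s hs0 hsT => by
        show (0:ℝ) ≤ (1 + (19/108) * (3 * s ^ 2)) - Real.cosh s
        have := cosh_taylor0 hs0.le hsT.le
        nlinarith [sq_nonneg s, mul_nonneg (mul_nonneg hs0.le hs0.le)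
          (by nlinarith : (0:ℝ) ≤ 1 - 4*s^2)]) h0 h2
  norm_num [Real.sinh_zero] at h
  nlinarith [h]

-- cosh t ≤ 1 + (19/36) t² on [0,1/2]
private lemma cosh_taylor {t : ℝ} (h0 : 0 ≤ t) (h2 : t ≤ 1/2) :
    Real.cosh t ≤ 1 + (19/36) * t ^ 2 := by
  have := cosh_taylor0 h0 h2
  nlinarith [mul_nonneg (mul_nonneg h0 h0) (by nlinarith : (0:ℝ) ≤ 1 - 4*t^2)]

-- tangent line bound for cosh at y0 > 0,  against y² coordinate
private lemma tangent {y0 y : ℝ} (hy0 : 0 < y0) (hy : 0 ≤ y) :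
    Real.cosh y0 + (y ^ 2 - y0 ^ 2) * (Real.sinh y0 / (2 * y0)) ≤ Real.cosh y := by
  set μ := Real.sinh y0 / (2 * y0) with hμ
  have hd : ∀ x : ℝ, HasDerivAt (fun s => Real.cosh s - (s ^ 2 - y0 ^ 2) * μ)
      (Real.sinh x - 2 * x ^ 1 * μ) x := by
    intro x
    exact (Real.hasDerivAt_cosh x).sub
      ((((hasDerivAt_pow 2 x).sub_const (y0 ^ 2)).mul_const μ).congr_deriv (by ring))
  rcases le_total y0 y with hc | hc
  · have h := monoIci (x0 := y0) hd
      (fun s hs => by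
        have hp := phi_mono hy0 hs.le
        have : 2 * s ^ 1 * μ = s * Real.sinh y0 / y0 := by
          rw [hμ]; field_simp
        rw [this]
        rw [sub_nonneg, div_le_iff₀ hy0]
        nlinarith [hp]) hc
    nlinarith [h]
  · have h := antiIcc (T := y0) hd
      (fun s hs0 hsT => by
        have hp := phi_mono hs0 hsT.le
        have : 2 * s ^ 1 * μ = s * Real.sinh y0 / y0 := by
          rw [hμ]; field_simp
        rw [this, sub_nonpos, le_div_iff₀ hy0]
        nlinarith [hp]) hy hc
    nlinarith [h]

-- cosh y ≥ 1 + y²/2 for y ≥ 0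
private lemma one_add_sq_le_cosh {y : ℝ} (hy : 0 ≤ y) : 1 + y ^ 2 / 2 ≤ Real.cosh y := by
  have h := monoIci (x0 := 0) (f := fun s => Real.cosh s - s ^ 2 / 2)
      (f' := fun s => Real.sinh s - 2 * s ^ 1 / 2)
      (fun x => (Real.hasDerivAt_cosh x).sub ((hasDerivAt_pow 2 x).div_const 2))
      (fun x hx => by
        show (0:ℝ) ≤ Real.sinh x - 2 * x ^ 1 / 2
        have : x ≤ Real.sinh x := Real.self_le_sinh_iff.2 hx.le
        nlinarith) hy
  norm_num [Real.cosh_zero] at h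
  nlinarith [h]

set_option maxHeartbeats 1000000


private lemma masterC4 {m D K β : ℝ} (hm0 : 0 ≤ m) (hm4 : m ≤ 1/4) (hD : 0 < D)
    (hK1 : 1 ≤ K) (hK2 : K ≤ 16/15) (hKm : 1 + 2*m^2 ≤ K^2)
    (hβdef : β = m - (K-1)*D/2) (hb : 0 < β) :
    K*D*Real.sinh β*Real.cosh β
      + (Real.sinh β)^2*(1+K^2*D^2/3) ≤ K^2*m*(m+D) := by
  have hβm : β ≤ m := by
    rw [hβdef]; nlinarith [mul_nonneg (sub_nonneg.2 hK1) hD.le]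
  have hβ4 : β ≤ 1/2 := by linarith
  have hS := sinh_taylor hb.le hβ4
  have hC := cosh_taylor hb.le hβ4
  have hS0 : 0 < Real.sinh β := Real.sinh_pos_iff.2 hb
  have hC0 : 1 ≤ Real.cosh β := Real.one_le_cosh β
  have hεm : 30*m^2/31 ≤ K - 1 := by nlinarith
  have hβ3 : β^3 ≤ m^2*β := by nlinarith [sq_nonneg (m - β), sq_nonneg (m + β)]
  -- (i)  sinh β ≤ K m  hence sinh²β ≤ K²m²
  have h1 : Real.sinh β ≤ K*m := by nlinarith
  have hi : (Real.sinh β)^2 ≤ K^2*m^2 := by nlinarith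
  -- sinh β cosh β ≤ β + (71/100) β³
  have hSC : Real.sinh β * Real.cosh β ≤ β + (71/100)*β^3 := by
    have h2 : Real.sinh β * Real.cosh β ≤ (β + (19/108)*β^3) * (1 + (19/36)*β^2) := by
      exact mul_le_mul hS hC (Real.cosh_pos β).le (by nlinarith)
    have hβq : β ≤ 1/4 := le_trans hβm hm4
    have h5 : β^5 ≤ β^3/16 := by
      nlinarith [mul_nonneg (pow_pos hb 3).le (show (0:ℝ) ≤ 1/16 - β^2 by nlinarith)]
    nlinarith [h2, h5, pow_pos hb 3]
  -- (ii)
  have hii : K*D*(Real.sinh β * Real.cosh β) ≤ K^2*m*D - K*D*(m - β) := by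
    have h3 : Real.sinh β * Real.cosh β ≤ K*m - (m - β) := by nlinarith
    have hKD : (0:ℝ) ≤ K*D := by positivity
    nlinarith [mul_le_mul_of_nonneg_left h3 hKD, hD.le, hK1]
  -- (iii)
  have hiii : (Real.sinh β)^2*(K^2*D^2/3) ≤ K*D*(m - β) := by
    have hmβ : m - β = (K-1)*D/2 := by rw [hβdef]; ring
    have hβq : β ≤ 1/4 := le_trans hβm hm4
    have hb4 : β^4 ≤ β^2/16 := by
      nlinarith [mul_nonneg (mul_nonneg hb.le hb.le) (show (0:ℝ) ≤ 1/16 - β^2 by nlinarith)]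
    have hb6 : β^6 ≤ β^2/256 := by
      nlinarith [mul_nonneg (mul_nonneg (mul_nonneg hb.le hb.le) (mul_nonneg hb.le hb.le))
        (show (0:ℝ) ≤ 1/16 - β^2 by nlinarith),
        mul_nonneg (mul_nonneg hb.le hb.le) (show (0:ℝ) ≤ 1/16 - β^2 by nlinarith)]
    have hS2 : (Real.sinh β)^2 ≤ (1023/1000)*m^2 := by
      have hsq : (Real.sinh β)^2 ≤ (β + (19/108)*β^3)^2 :=
        pow_le_pow_left₀ hS0.le hS 2
      have hβ2 : β^2 ≤ m^2 := pow_le_pow_left₀ hb.le hβm 2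
      nlinarith [hsq, hb4, hb6, hβ2, sq_nonneg β]
    have h4 : (Real.sinh β)^2*(K^2*D^2/3) ≤ (1023/1000)*m^2*(K^2*D^2/3) :=
      mul_le_mul_of_nonneg_right hS2 (by positivity)
    rw [hmβ]
    have hKK : K^2 ≤ (16/15)*K := by nlinarith
    nlinarith [h4, mul_le_mul_of_nonneg_right hεm (show (0:ℝ) ≤ K*D^2/2 by positivity),
      mul_le_mul_of_nonneg_right hKK (show (0:ℝ) ≤ m^2*D^2/3 by positivity)]
  nlinarith [hi, hii, hiii, hS0]

private lemma C2 {m D K : ℝ} (hm0 : 0 ≤ m) (hm4 : m ≤ 1/4) (hD : 0 < D)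
    (hK1 : 1 ≤ K) (hK2 : K ≤ 16/15) (hKm : 1 + 2*m^2 ≤ K^2) :
    D * Real.cosh (2*m+D) ≤ D * Real.cosh (K*D) + 2*K*(m*(m+D)) * Real.sinh (K*D) := by
  obtain ⟨β, hβdef⟩ : ∃ β, β = m - (K-1)*D/2 := ⟨_, rfl⟩
  have e1 : 2*m + D = (K*D + β) + β := by rw [hβdef]; ring
  have e2 : K*D = (K*D + β) - β := by ring
  have hsplit : Real.cosh (2*m+D) - Real.cosh (K*D)
      = 2 * Real.sinh (K*D + β) * Real.sinh β := by
    rw [e1]; nth_rewrite 2 [e2]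
    rw [Real.cosh_add, Real.cosh_sub]; ring
  have hsinhKD : 0 < Real.sinh (K*D) := Real.sinh_pos_iff.2 (by positivity)
  rcases le_or_gt β 0 with hβ0 | hβ0
  · have h1 : Real.sinh β ≤ 0 := Real.sinh_nonpos_iff.2 hβ0
    have h2 : 0 ≤ Real.sinh (K*D + β) := Real.sinh_nonneg_iff.2 (by
      rw [hβdef]; nlinarith)
    nlinarith [hsplit, mul_nonneg h2 (neg_nonneg.2 h1), hD.le,
      mul_nonneg (mul_nonneg (by linarith : (0:ℝ) ≤ K) (mul_nonneg hm0 (by linarith : (0:ℝ) ≤ m + D))) hsinhKD.le]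
  · have hexp : Real.sinh (K*D + β) = Real.sinh (K*D) * Real.cosh β
        + Real.cosh (K*D) * Real.sinh β := Real.sinh_add _ _
    have hC4 := masterC4 hm0 hm4 hD hK1 hK2 hKm hβdef hβ0
    have hL3' := L3 (y := K*D) (by positivity)
    have h1 : K*D*Real.cosh (K*D) ≤ (1+K^2*D^2/3) * Real.sinh (K*D) := by
      nlinarith [hL3']
    have hSβ : 0 < Real.sinh β := Real.sinh_pos_iff.2 hβ0
    have hK0 : (0:ℝ) < K := by linarith
    rw [← mul_le_mul_iff_right₀ hK0]
    have hexpand : Real.cosh (2*m+D) = Real.cosh (K*D)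
        + 2*(Real.sinh (K*D)*Real.cosh β + Real.cosh (K*D)*Real.sinh β)*Real.sinh β := by
      rw [← hexp]; linarith [hsplit]
    rw [hexpand]
    have hA := mul_le_mul_of_nonneg_left h1 (by positivity : (0:ℝ) ≤ 2*(Real.sinh β)^2)
    have hB := mul_le_mul_of_nonneg_left hC4 (by positivity : (0:ℝ) ≤ 2*Real.sinh (K*D))
    nlinarith [hA, hB]


private lemma sinh_sq_le {b : ℝ} (hb : 0 ≤ b) (hb4 : b ≤ 1/4) :
    (Real.sinh b)^2 ≤ (1+2*b^2)*b^2 := by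
  have hsb := sinh_taylor hb (by linarith : b ≤ 1/2)
  have hsb0 : 0 ≤ Real.sinh b := Real.sinh_nonneg_iff.2 hb
  have h6 : b^6 ≤ b^4/16 := by
    nlinarith [mul_nonneg (mul_nonneg (mul_nonneg hb hb) (mul_nonneg hb hb))
      (show (0:ℝ) ≤ 1/16 - b^2 by nlinarith)]
  nlinarith [pow_le_pow_left₀ hsb0 hsb 2, h6, pow_nonneg hb 4]

theorem hyperbolic_distortion
    (a b c A : ℝ) (ha : 0 ≤ a) (hb : 0 ≤ b) (hc : 0 ≤ c)
    (hA : A ∈ Set.Icc (0 : ℝ) Real.pi)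
    (hlaw : Real.cosh a = Real.cosh b * Real.cosh c
        - Real.sinh b * Real.sinh c * Real.cos A)
    (hb4 : b ≤ 1 / 4)
    (abar : ℝ) (habar : 0 ≤ abar)
    (habar2 : abar ^ 2 = b ^ 2 + c ^ 2 - 2 * b * c * Real.cos A) :
    abar ^ 2 ≤ a ^ 2 ∧ a ^ 2 ≤ (1 + 2 * b ^ 2) * abar ^ 2 := by
  have ht1 : Real.cos A ≤ 1 := Real.cos_le_one A
  have ht2 : -1 ≤ Real.cos A := Real.neg_one_le_cos A
  obtain ⟨m, hm⟩ : ∃ m, m = min b c := ⟨_, rfl⟩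
  obtain ⟨D, hD⟩ : ∃ D, D = max b c - min b c := ⟨_, rfl⟩
  have hDabs : D = |b - c| := by rw [hD, max_sub_min_eq_abs, abs_sub_comm]
  have hD0 : 0 ≤ D := by rw [hDabs]; positivity
  have hD2 : D^2 = (b-c)^2 := by rw [hDabs, sq_abs]
  have hm0 : 0 ≤ m := by rw [hm]; exact le_min hb hc
  have hm4 : m ≤ 1/4 := by rw [hm]; exact le_trans (min_le_left b c) hb4
  obtain ⟨hmm, h2m⟩ : m*(m+D) = b*c ∧ 2*m+D = b+c := by
    rcases le_total b c with h | h
    · rw [hm, hD, min_eq_left h, max_eq_right h]; exact ⟨by ring, by ring⟩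
    · rw [hm, hD, min_eq_right h, max_eq_left h]; exact ⟨by ring, by ring⟩
  have hcoshD : Real.cosh D = Real.cosh b * Real.cosh c - Real.sinh b * Real.sinh c := by
    rw [hDabs, Real.cosh_abs, Real.cosh_sub]
  have hcosha : Real.cosh a = Real.cosh D + (1 - Real.cos A) * (Real.sinh b * Real.sinh c) := by
    rw [hlaw, hcoshD]; ring
  have habarD : abar^2 = D^2 + 2*(b*c)*(1 - Real.cos A) := by rw [habar2, hD2]; ring
  have hsbc : 0 ≤ Real.sinh b * Real.sinh c :=
    mul_nonneg (Real.sinh_nonneg_iff.2 hb) (Real.sinh_nonneg_iff.2 hc)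
  -- K
  obtain ⟨K, hK⟩ : ∃ K, K = Real.sqrt (1 + 2*b^2) := ⟨_, rfl⟩
  have hKsq : K^2 = 1 + 2*b^2 := by rw [hK]; exact Real.sq_sqrt (by positivity)
  have hK0 : 0 ≤ K := by rw [hK]; exact Real.sqrt_nonneg _
  have hK1 : 1 ≤ K := by
    rw [hK]
    have h := Real.sqrt_le_sqrt (show (1:ℝ) ≤ 1 + 2*b^2 by linarith [sq_nonneg b])
    rwa [Real.sqrt_one] at h
  have hK2 : K ≤ 16/15 := by
    rw [hK]
    have h := Real.sqrt_le_sqrt (show 1 + 2*b^2 ≤ ((16:ℝ)/15)^2 by linarith [pow_le_pow_left₀ hb hb4 2])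
    rwa [Real.sqrt_sq (by norm_num : (0:ℝ) ≤ 16/15)] at h
  have hKm : 1 + 2*m^2 ≤ K^2 := by
    have hmb : m ≤ b := by rw [hm]; exact min_le_left b c
    have := pow_le_pow_left₀ hm0 hmb 2
    rw [hKsq]; linarith
  -- LOWER BOUND
  have hlow : abar^2 ≤ a^2 := by
    have hkey : Real.cosh abar ≤ Real.cosh a := by
      rcases eq_or_lt_of_le habar with h0 | h0
      · rw [← h0, Real.cosh_zero]; exact Real.one_le_cosh a
      · have e1 := tangent h0 (abs_nonneg (b - c))
        rw [Real.cosh_abs, sq_abs] at e1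
        have e2 := tangent h0 (by positivity : (0:ℝ) ≤ b + c)
        have hw1 : (0:ℝ) ≤ 1 - (1 - Real.cos A)/2 := by linarith
        have hw2 : (0:ℝ) ≤ (1 - Real.cos A)/2 := by linarith
        have hz : (1 - (1-Real.cos A)/2) * (((b-c)^2 - abar^2) * (Real.sinh abar/(2*abar)))
            + ((1-Real.cos A)/2) * (((b+c)^2 - abar^2) * (Real.sinh abar/(2*abar))) = 0 := by
          linear_combination (-(Real.sinh abar/(2*abar))) * habar2
        have hcosha2 : Real.cosh a = (1 - (1-Real.cos A)/2) * Real.cosh (b-c)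
            + ((1-Real.cos A)/2) * Real.cosh (b+c) := by
          rw [hlaw, Real.cosh_sub, Real.cosh_add]; ring
        have m1 := mul_le_mul_of_nonneg_left e1 hw1
        have m2 := mul_le_mul_of_nonneg_left e2 hw2
        linarith [m1, m2, hz]
    have h1 : abar ≤ a := by
      have h2 := Real.cosh_le_cosh.1 hkey
      rwa [abs_of_nonneg habar, abs_of_nonneg ha] at h2
    exact pow_le_pow_left₀ habar h1 2
  -- UPPER BOUND
  have hup : Real.cosh a ≤ Real.cosh (K*abar) := by
    rcases eq_or_lt_of_le hD0 with hD0' | hDpos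
    · -- D = 0, so b = c
      have habs0 : |b - c| = 0 := by rw [← hDabs]; exact hD0'.symm
      have hbc : b = c := by have := abs_eq_zero.1 habs0; linarith
      rw [← hD0'] at habarD hcosha
      rw [Real.cosh_zero] at hcosha
      have hT0 := one_add_sq_le_cosh (y := K*abar) (by positivity)
      have hsb2 : (Real.sinh b)^2 ≤ (1+2*b^2)*b^2 := sinh_sq_le hb hb4
      have hKab : (K*abar)^2 = (1+2*b^2) * abar^2 := by rw [mul_pow, hKsq]
      rw [← hbc] at habarD
      have h7 : (K*abar)^2 = (1+2*b^2)*(2*(b*b)*(1-Real.cos A)) := by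
        rw [hKab, habarD]; ring
      rw [hcosha, ← hbc]
      linarith [hT0, h7,
        mul_le_mul_of_nonneg_left hsb2 (show (0:ℝ) ≤ 1 - Real.cos A by linarith)]
    · -- D > 0
      have htan := tangent (y0 := K*D) (by positivity) (y := K*abar) (by positivity)
      have hC2 := C2 hm0 hm4 hDpos hK1 hK2 hKm
      rw [h2m, hmm] at hC2
      have hcoshbc : Real.cosh (b+c) = Real.cosh D + 2*(Real.sinh b*Real.sinh c) := by
        rw [Real.cosh_add, hcoshD]; ring
      rw [hcoshbc] at hC2
      have hcDKD : Real.cosh D ≤ Real.cosh (K*D) := by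
        rw [Real.cosh_le_cosh, abs_of_nonneg hD0, abs_of_nonneg (by positivity)]
        linarith [mul_le_mul_of_nonneg_right hK1 hD0]
      have hcoshaD : D*Real.cosh a = D*Real.cosh D
          + (1-Real.cos A)*D*(Real.sinh b * Real.sinh c) := by rw [hcosha]; ring
      have ha1 := mul_le_mul_of_nonneg_left hC2
        (show (0:ℝ) ≤ (1-Real.cos A)/2 by linarith)
      have ha2 := mul_nonneg (mul_nonneg
        (show (0:ℝ) ≤ 1-(1-Real.cos A)/2 by linarith) hD0)
        (sub_nonneg.2 hcDKD)
      have hstep : D * Real.cosh a ≤ D*Real.cosh (K*D)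
          + (1-Real.cos A)*K*(b*c)*Real.sinh (K*D) := by linarith [ha1, ha2, hcoshaD]
      have htimesD := mul_le_mul_of_nonneg_left htan hD0
      have hterm2 : D*(((K*abar)^2 - (K*D)^2) * (Real.sinh (K*D)/(2*(K*D))))
          = (1-Real.cos A)*K*(b*c)*Real.sinh (K*D) := by
        rw [mul_pow, mul_pow, habarD]
        have hDne : D ≠ 0 := ne_of_gt hDpos
        have hKne : K ≠ 0 := by linarith
        field_simp
        ring
      exact (mul_le_mul_iff_right₀ hDpos).1 (by linarith [hstep, htimesD, hterm2])
  have hKa : a ≤ K*abar := by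
    have h2 := Real.cosh_le_cosh.1 hup
    rwa [abs_of_nonneg ha, abs_of_nonneg (by positivity)] at h2
  refine ⟨hlow, ?_⟩
  calc a^2 ≤ (K*abar)^2 := pow_le_pow_left₀ ha hKa 2
    _ = (1+2*b^2)*abar^2 := by rw [mul_pow, hKsq]
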